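/- Let s be the k-th avalanche of KSPM(D) with a column l such that all of l,…,l+D−2 are fired in s. Then for every column j with l+D−1 ≤ j < max s, the columns j−(D−1), j, and j+1 are all fired in s, and consequently π(k)_j = π(k−1)_j. -/

import Mathlib

/-- Effect of firing column `i` in KSPM(D), on height-difference configurations. -/
def step (D : ℕ) (σ : ℕ → ℕ) (i : ℕ) : ℕ → ℕ :=
  fun j =>
    if j = i then σ i - D
    else if j + 1 = i then σ j + (D - 1)
    else if j = i + D - 1 then σ j + 1
    else σ j

/-- Transition on column `i`: `σ →ᵢ σ'`. -/
def KTrans (D : ℕ) (σ : ℕ → ℕ) (i : ℕ) (σ' : ℕ → ℕ) : Prop :=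
  D ≤ σ i ∧ σ' = step D σ i

/-- A strategy (list of fired columns) is legal from `σ`. -/
def Legal (D : ℕ) : (ℕ → ℕ) → List ℕ → Prop
  | _, [] => True
  | σ, i :: s => D ≤ σ i ∧ Legal D (step D σ i) s

/-- Configuration obtained by applying a strategy. -/
def applyStrat (D : ℕ) : (ℕ → ℕ) → List ℕ → (ℕ → ℕ)
  | σ, [] => σ
  | σ, i :: s => applyStrat D (step D σ i) s

/-- Reachability `σ →* σ'`. -/
def Reaches (D : ℕ) (σ σ' : ℕ → ℕ) : Prop :=
  ∃ s : List ℕ, Legal D σ s ∧ applyStrat D σ s = σ'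

/-- A configuration is stable (a fixed point) if no transition is possible. -/
def Stable (D : ℕ) (σ : ℕ → ℕ) : Prop := ∀ i, σ i < D

/-- Initial configuration: `N` grains stacked on column 0 (height differences `(N,0,0,…)`). -/
def initConf (N : ℕ) : ℕ → ℕ := fun j => if j = 0 then N else 0

/-- `τ = π(N)`: the stable configuration reachable from `N` stacked grains. -/
def IsPi (D N : ℕ) (τ : ℕ → ℕ) : Prop := Reaches D (initConf N) τ ∧ Stable D τ

/-- `σ^{↓0}`: add one grain on column 0. -/
def addGrain (σ : ℕ → ℕ) : ℕ → ℕ := Function.update σ 0 (σ 0 + 1)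

/-- `s` is the leftmost (lexicographically minimal) strategy from `τ^{↓0}` to `τ'`. -/
def IsAvalancheFor (D : ℕ) (τ τ' : ℕ → ℕ) (s : List ℕ) : Prop :=
  Legal D (addGrain τ) s ∧ applyStrat D (addGrain τ) s = τ' ∧
    ∀ s' : List ℕ, Legal D (addGrain τ) s' → applyStrat D (addGrain τ) s' = τ' →
      ¬ List.Lex (· < ·) s' s

/-- `s` is the `k`-th avalanche: leftmost strategy from `π(k-1)^{↓0}` to `π(k)`. -/
def IsAvalanche (D k : ℕ) (s : List ℕ) : Prop :=
  ∃ τ τ' : ℕ → ℕ, IsPi D (k - 1) τ ∧ IsPi D k τ' ∧ IsAvalancheFor D τ τ' s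

/-- Position `t` (0-indexed) of strategy `s` is a peak: it exceeds all earlier fired columns. -/
def IsPeak (s : List ℕ) (t : ℕ) : Prop :=
  t < s.length ∧ ∀ t' < t, s.getD t' 0 < s.getD t 0

/-- Column `p` is a peak of `s`. -/
def IsPeakVal (s : List ℕ) (p : ℕ) : Prop :=
  ∃ t : ℕ, IsPeak s t ∧ s.getD t 0 = p

lemma legal_append (D : ℕ) (p q : List ℕ) (σ : ℕ → ℕ) (h : Legal D σ (p ++ q)) :
    Legal D σ p ∧ Legal D (applyStrat D σ p) q := by
  induction p generalizing σ with
  | nil => exact ⟨trivial, h⟩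
  | cons i p ih =>
    obtain ⟨h1, h2⟩ := h
    obtain ⟨h3, h4⟩ := ih _ h2
    exact ⟨⟨h1, h3⟩, h4⟩

lemma invariant (D : ℕ) (hD : 2 ≤ D) :
    ∀ (p : List ℕ) (σ : ℕ → ℕ), Legal D σ p → ∀ j,
      applyStrat D σ p j + D * p.count j =
        σ j + (D - 1) * p.count (j + 1) +
          (if D - 1 ≤ j then p.count (j - (D - 1)) else 0) := by
  intro p
  induction p with
  | nil => intro σ _ j; simp [applyStrat]
  | cons i p ih =>
    intro σ hleg j
    obtain ⟨h1, h2⟩ := hleg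
    have key := ih (step D σ i) h2 j
    have hstep : step D σ i j + D * (if i = j then 1 else 0) =
        σ j + (D - 1) * (if i = j + 1 then 1 else 0) +
          (if D - 1 ≤ j then (if i = j - (D - 1) then 1 else 0) else 0) := by
      simp only [step]
      split_ifs <;> first | omega | (subst_vars; omega)
    show applyStrat D (step D σ i) p j + D * ((i :: p).count j) = _
    rw [List.count_cons, List.count_cons, List.count_cons]
    simp only [beq_iff_eq]
    by_cases hc : D - 1 ≤ j
    · simp only [if_pos hc] at key hstep ⊢
      rw [Nat.mul_add, Nat.mul_add]
      linarith [key, hstep]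
    · simp only [if_neg hc] at key hstep ⊢
      rw [Nat.mul_add, Nat.mul_add]
      linarith [key, hstep]

lemma addGrain_apply (τ : ℕ → ℕ) (c : ℕ) :
    addGrain τ c = if c = 0 then τ 0 + 1 else τ c := by
  by_cases h : c = 0
  · subst h; simp [addGrain]
  · simp [addGrain, Function.update_of_ne h, h]

lemma nodup_aux (D : ℕ) (hD : 2 ≤ D) (τ : ℕ → ℕ) (hτs : ∀ i, τ i < D) :
    ∀ (b a : List ℕ), Legal D (addGrain τ) (a ++ b) → a.Nodup → (a ++ b).Nodup := by
  intro b
  induction b with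
  | nil => intro a _ hnd; simpa using hnd
  | cons c b ih =>
    intro a hleg hnd
    obtain ⟨hLa, hLr⟩ := legal_append D a (c :: b) (addGrain τ) hleg
    have hAc : D ≤ applyStrat D (addGrain τ) a c := hLr.1
    have hc : c ∉ a := by
      intro hmem
      have e := invariant D hD a (addGrain τ) hLa c
      rw [List.count_eq_one_of_mem hnd hmem] at e
      have hb : a.count (c+1) ≤ 1 := List.nodup_iff_count_le_one.mp hnd _
      have hd : a.count (c - (D-1)) ≤ 1 := List.nodup_iff_count_le_one.mp hnd _
      have hb2 : a.count (c+1) = 0 ∨ a.count (c+1) = 1 := by omega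
      have hd2 : a.count (c - (D-1)) = 0 ∨ a.count (c - (D-1)) = 1 := by omega
      rw [addGrain_apply] at e
      have hτc := hτs c
      have hτ0 := hτs 0
      by_cases hdc : D - 1 ≤ c
      · have hc0 : c ≠ 0 := by omega
        rw [if_pos hdc, if_neg hc0] at e
        rcases hb2 with h|h <;> rcases hd2 with h'|h' <;> rw [h, h'] at e <;> omega
      · rw [if_neg hdc] at e
        by_cases hc0 : c = 0
        · rw [if_pos hc0] at e
          rcases hb2 with h|h <;> rw [h] at e <;> omega
        · rw [if_neg hc0] at e
          rcases hb2 with h|h <;> rw [h] at e <;> omega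
    have hnd' : (a ++ [c]).Nodup := by
      rw [List.nodup_append]
      exact ⟨hnd, List.nodup_singleton c, by simpa [List.disjoint_singleton] using fun (x : ℕ) (hx : x ∈ a) (h : x = c) => hc (h ▸ hx)⟩
    have hre : (a ++ [c]) ++ b = a ++ (c :: b) := by simp
    have := ih (a ++ [c]) (by rw [hre]; exact hleg) hnd'
    rwa [hre] at this

lemma cross (D g : ℕ) : ∀ (p : List ℕ) (σ : ℕ → ℕ), Legal D σ p → ∀ m, m ∈ p → g < m →
    ∃ q c, Legal D σ q ∧ (∀ x ∈ q, x ≤ g) ∧ g < c ∧ c ∈ p ∧ D ≤ applyStrat D σ q c := by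
  intro p
  induction p with
  | nil => intro σ _ m hm; cases hm
  | cons i p ih =>
    intro σ hleg m hm hgm
    by_cases hi : g < i
    · exact ⟨[], i, trivial, by simp, hi, List.mem_cons_self, hleg.1⟩
    · have hm' : m ∈ p := by
        rcases List.mem_cons.mp hm with h | h
        · omega
        · exact h
      obtain ⟨q, c, h1, h2, h3, h4, h5⟩ := ih (step D σ i) hleg.2 m hm' hgm
      refine ⟨i :: q, c, ⟨hleg.1, h1⟩, ?_, h3, List.mem_cons_of_mem _ h4, h5⟩
      intro x hx
      rcases List.mem_cons.mp hx with h | h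
      · omega
      · exact h2 _ h

lemma foldr_max_mem : ∀ (s : List ℕ), s.foldr max 0 = 0 ∨ s.foldr max 0 ∈ s := by
  intro s
  induction s with
  | nil => exact Or.inl rfl
  | cons a t ih =>
    simp only [List.foldr]
    rcases le_or_gt (t.foldr max 0) a with h | h
    · right; rw [max_eq_left h]; exact List.mem_cons_self
    · rw [max_eq_right h.le]
      rcases ih with h0 | hm
      · exact Or.inl h0
      · exact Or.inr (List.mem_cons_of_mem _ hm)

/-- If a block l,…,l+D-2 is fired, then for every j with l+D-1 ≤ j < max s, the columns
j-(D-1), j and j+1 are all fired, and consequently π(k)_j = π(k-1)_j. -/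
theorem middle_columns_unchanged (D k l : ℕ) (hD : 2 ≤ D) (hk : 1 ≤ k)
    (s : List ℕ) (τ τ' : ℕ → ℕ) (hτ : IsPi D (k - 1) τ) (hτ' : IsPi D k τ')
    (hav : IsAvalancheFor D τ τ' s)
    (hl : ∀ i : ℕ, l ≤ i → i < l + D - 1 → i ∈ s) :
    ∀ j : ℕ, l + D - 1 ≤ j → j < s.foldr max 0 →
      ((j - (D - 1)) ∈ s ∧ j ∈ s ∧ (j + 1) ∈ s) ∧ τ' j = τ j := by
  classical
  obtain ⟨hleg, happ, -⟩ := hav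
  have hτs : ∀ i, τ i < D := hτ.2
  have hτ's : ∀ i, τ' i < D := hτ'.2
  have hnd : s.Nodup := by
    have := nodup_aux D hD τ hτs s [] (by simpa using hleg) (by simp)
    simpa using this
  have inv : ∀ j, τ' j + D * s.count j =
      addGrain τ j + (D - 1) * s.count (j + 1) +
        (if D - 1 ≤ j then s.count (j - (D - 1)) else 0) := by
    intro j
    have := invariant D hD s (addGrain τ) hleg j
    rwa [happ] at this
  have haddg : ∀ x, x ≠ 0 → addGrain τ x = τ x := by
    intro x hx; rw [addGrain_apply, if_neg hx]
  set M := s.foldr max 0 with hM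
  have key : ∀ x, l ≤ x → x ≤ M → x ∈ s := by
    by_contra hx
    push_neg at hx
    obtain ⟨x0, hx1, hx2, hx3⟩ := hx
    have hP : ∃ x, l ≤ x ∧ x ≤ M ∧ x ∉ s := ⟨x0, hx1, hx2, hx3⟩
    set g := Nat.find hP with hgdef
    obtain ⟨hg1, hg2, hg3⟩ := Nat.find_spec hP
    have hmin : ∀ y, y < g → l ≤ y → y ≤ M → y ∈ s := by
      intro y hy h1 h2
      by_contra h
      exact (Nat.find_min hP hy) ⟨h1, h2, h⟩
    have hgl : l + D - 1 ≤ g := by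
      by_contra h
      exact hg3 (hl g hg1 (by omega))
    have hseg : ∀ y, l ≤ y → y < g → y ∈ s := fun y h1 h2 => hmin y h2 h1 (by omega)
    have stab : ∀ x, 1 ≤ x → D - 1 ≤ x → x ∉ s → (x - (D - 1)) ∈ s → (x + 1) ∉ s := by
      intro x hx1 hx2 hxs hxp hmem
      have e := inv x
      rw [if_pos hx2, List.count_eq_zero_of_not_mem hxs,
          List.count_eq_one_of_mem hnd hxp, List.count_eq_one_of_mem hnd hmem,
          haddg x (by omega)] at e
      have h1 := hτs x
      have h2 := hτ's x
      omega
    have ha : ∀ t, t ≤ D - 1 → (g + t) ∉ s := by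
      intro t
      induction t with
      | zero => intro _; simpa using hg3
      | succ t ih =>
        intro ht
        have h1 : g + t ∉ s := ih (by omega)
        have h2 : (g + t) - (D - 1) ∈ s := hseg _ (by omega) (by omega)
        have h3 := stab (g + t) (by omega) (by omega) h1 h2
        intro hmem
        exact h3 (by rw [show g + t + 1 = g + (t + 1) by omega]; exact hmem)
    have hMs : M ∈ s := by
      rcases foldr_max_mem s with h | h
      · rw [← hM] at h; exact absurd h (by omega)
      · rwa [← hM] at h
    have hgM : g < M := by
      rcases Nat.lt_or_ge g M with h | h
      · exact h
      · have : g = M := by omega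
        exact absurd hMs (this ▸ hg3)
    obtain ⟨q, c, hq1, hq2, hq3, hq4, hq5⟩ := cross D g s (addGrain τ) hleg M hMs hgM
    have hc : g + D ≤ c := by
      by_contra h
      exact ha (c - g) (by omega) (by rw [show g + (c - g) = c by omega]; exact hq4)
    have einv := invariant D hD q (addGrain τ) hq1 c
    have hcnt1 : q.count (c + 1) = 0 :=
      List.count_eq_zero_of_not_mem (fun h => by have := hq2 _ h; omega)
    have hcnt2 : q.count (c - (D - 1)) = 0 :=
      List.count_eq_zero_of_not_mem (fun h => by have := hq2 _ h; omega)
    rw [if_pos (show D - 1 ≤ c by omega), hcnt1, hcnt2, haddg c (by omega)] at einv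
    have h0 : applyStrat D (addGrain τ) q c ≤
        applyStrat D (addGrain τ) q c + D * q.count c := Nat.le_add_right _ _
    rw [einv] at h0
    have := hτs c
    omega
  intro j hj1 hj2
  have h2 : j ∈ s := key j (by omega) (by omega)
  have h1 : (j - (D - 1)) ∈ s := key _ (by omega) (by omega)
  have h3 : (j + 1) ∈ s := key _ (by omega) (by omega)
  refine ⟨⟨h1, h2, h3⟩, ?_⟩
  have e := inv j
  rw [if_pos (show D - 1 ≤ j by omega), List.count_eq_one_of_mem hnd h1,
      List.count_eq_one_of_mem hnd h2, List.count_eq_one_of_mem hnd h3,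
      haddg j (by omega)] at e
  omega
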